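/- In the ladder graph L_n = P_n □ K_2 (n ≥ 2), with P_n = a_1...a_n and K_2 = c_1c_2, the resistance distance between diagonally opposite corners satisfies R_{L_n}[(a_1,c_1),(a_n,c_2)] = (n−1)/2 + (1+α^{n−1})(2 + 2α^{n+1} + 2α^n + 2α)/(4√3(1−α^{2n})), where α = 2 − √3. -/

import Mathlib

open Matrix Finset

open Classical in
/-- The Moore–Penrose pseudoinverse of a real square matrix, defined via the
four Penrose conditions (it is unique when it exists). -/
noncomputable def Matrix.mpinv {m : Type*} [Fintype m] [DecidableEq m]
    (A : Matrix m m ℝ) : Matrix m m ℝ :=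
  if h : ∃ B : Matrix m m ℝ,
      A * B * A = A ∧ B * A * B = B ∧ (A * B)ᵀ = A * B ∧ (B * A)ᵀ = B * A
  then h.choose else 0

/-- Effective resistance between `u` and `v` with respect to a (weighted)
Laplacian matrix `L`:  `(e_u - e_v)ᵀ L⁺ (e_u - e_v)`. -/
noncomputable def effRes {m : Type*} [Fintype m] [DecidableEq m]
    (L : Matrix m m ℝ) (u v : m) : ℝ :=
  (Pi.single u 1 - Pi.single v 1) ⬝ᵥ (L.mpinv *ᵥ (Pi.single u 1 - Pi.single v 1))

/-- The (real) Laplacian matrix of a simple graph. -/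
noncomputable def lapm {V : Type*} [Fintype V] [DecidableEq V]
    (G : SimpleGraph V) : Matrix V V ℝ :=
  letI := Classical.decRel G.Adj
  G.lapMatrix ℝ

/-- Resistance distance between two vertices of a simple graph. -/
noncomputable def resDist {V : Type*} [Fintype V] [DecidableEq V]
    (G : SimpleGraph V) (u v : V) : ℝ :=
  effRes (lapm G) u v

/-- Resistance diameter of a simple graph. -/
noncomputable def resDiam {V : Type*} [Fintype V] [DecidableEq V]
    (G : SimpleGraph V) : ℝ :=
  ⨆ p : V × V, resDist G p.1 p.2

/-- The weighted Laplacian of the cone over `G` with apex `Sum.inr ()`: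
edges of `G` have conductance `1` (unit resistance), and each vertex of `G`
is joined to the apex by an edge of conductance `m` (resistance `1/m`). -/
noncomputable def coneLap {V : Type*} [Fintype V] [DecidableEq V]
    (G : SimpleGraph V) (m : ℝ) : Matrix (V ⊕ Unit) (V ⊕ Unit) ℝ :=
  letI := Classical.decRel G.Adj
  let W : Matrix (V ⊕ Unit) (V ⊕ Unit) ℝ := fun i j =>
    match i, j with
    | Sum.inl a, Sum.inl b => if G.Adj a b then 1 else 0
    | Sum.inl _, Sum.inr _ => m
    | Sum.inr _, Sum.inl _ => m
    | Sum.inr _, Sum.inr _ => 0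
  Matrix.of fun i j => (if i = j then ∑ k, W i k else 0) - W i j

/-- The `k`-dimensional hypercube graph `Q_k`. -/
def hypercube (k : ℕ) : SimpleGraph (Fin k → Bool) where
  Adj x y := (Finset.univ.filter fun i => x i ≠ y i).card = 1
  symm := by
    refine ⟨?_⟩
    intro x y h
    rw [← h]
    congr 1
    ext i
    simp [ne_comm]
  loopless := by refine ⟨?_⟩; intro x; simp

/-- The join `G + H` of two graphs on disjoint vertex sets. -/
def graphJoin {V W : Type*} (G : SimpleGraph V) (H : SimpleGraph W) :
    SimpleGraph (V ⊕ W) where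
  Adj x y :=
    match x, y with
    | Sum.inl a, Sum.inl b => G.Adj a b
    | Sum.inr a, Sum.inr b => H.Adj a b
    | Sum.inl _, Sum.inr _ => True
    | Sum.inr _, Sum.inl _ => True
  symm := by
    refine ⟨?_⟩
    rintro (a | a) (b | b) h
    · exact G.symm.symm _ _ h
    · trivial
    · trivial
    · exact H.symm.symm _ _ h
  loopless := by
    refine ⟨?_⟩
    rintro (a | a) h
    · exact G.loopless.irrefl a h
    · exact H.loopless.irrefl a h

section AuxLemmas
variable {V : Type*} [Fintype V] [DecidableEq V]

variable {V : Type*} [Fintype V] [DecidableEq V]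

lemma lapm_isSymm (G : SimpleGraph V) : (lapm G).IsSymm := by
  classical
  unfold lapm
  exact SimpleGraph.isSymm_lapMatrix (G := G) (R := ℝ)

lemma exists_penrose (G : SimpleGraph V) (hG : G.Connected) :
    ∃ B : Matrix V V ℝ,
      lapm G * B * lapm G = lapm G ∧ B * (lapm G) * B = B ∧
      (lapm G * B)ᵀ = lapm G * B ∧ (B * lapm G)ᵀ = B * lapm G := by
  letI := Classical.decRel G.Adj
  have hne : Nonempty V := hG.nonempty
  set L : Matrix V V ℝ := lapm G with hL
  have hlap : L = G.lapMatrix ℝ := rfl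
  set J : Matrix V V ℝ := Matrix.of (fun _ _ => (1:ℝ)) with hJ
  have hcard : (0:ℝ) < (Fintype.card V : ℝ) := by
    exact_mod_cast Fintype.card_pos
  set c : ℝ := ((Fintype.card V : ℝ))⁻¹ with hc
  have hcne : c ≠ 0 := inv_ne_zero hcard.ne'
  set M : Matrix V V ℝ := L + c • J with hM
  have hLJ : L * J = 0 := by
    ext i j
    have h0 := congrFun (SimpleGraph.lapMatrix_mulVec_const_eq_zero (R := ℝ) G) i
    simp only [Matrix.mul_apply, hJ, Matrix.of_apply, mul_one]
    simpa [Matrix.mulVec, dotProduct, hlap] using h0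
  have hJL : J * L = 0 := by
    have : (J * L)ᵀ = 0 := by
      have hJt : Jᵀ = J := by ext i j; simp [hJ]
      rw [Matrix.transpose_mul, hJt, hL, (lapm_isSymm G).eq, ← hL, hLJ]
    calc J * L = ((J * L)ᵀ)ᵀ := by rw [Matrix.transpose_transpose]
    _ = 0 := by rw [this]; simp
  have hJJ : J * J = (Fintype.card V : ℝ) • J := by
    ext i j; simp [hJ, Matrix.mul_apply, Matrix.smul_apply]
  -- M is positive definite
  have hMh : M.IsHermitian := by
    rw [Matrix.IsHermitian, Matrix.conjTranspose_eq_transpose_of_trivial, hM,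
      Matrix.transpose_add, (lapm_isSymm G).eq, Matrix.transpose_smul]
    have hJt : Jᵀ = J := by ext i j; simp [hJ]
    rw [hJt, ← hL]
  have hMpd : M.PosDef := by
    refine Matrix.PosDef.of_dotProduct_mulVec_pos hMh (fun x hx => ?_)
    simp only [star_trivial]
    have hJx : x ⬝ᵥ (J *ᵥ x) = (∑ i, x i) ^ 2 := by
      simp only [dotProduct, Matrix.mulVec, hJ, Matrix.of_apply, mul_one, sq,
        Finset.mul_sum, Finset.sum_mul]
      refine Finset.sum_congr rfl fun a _ => Finset.sum_congr rfl fun b _ => ?_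
      ring
    have hLx : 0 ≤ x ⬝ᵥ (L *ᵥ x) := by
      have := (SimpleGraph.posSemidef_lapMatrix (R := ℝ) (G := G)).dotProduct_mulVec_nonneg x
      simpa [hlap] using this
    have hsplit : x ⬝ᵥ (M *ᵥ x) = x ⬝ᵥ (L *ᵥ x) + c * (∑ i, x i) ^ 2 := by
      rw [hM, Matrix.add_mulVec, dotProduct_add, Matrix.smul_mulVec,
        dotProduct_smul, smul_eq_mul, hJx]
    rw [hsplit]
    rcases eq_or_lt_of_le hLx with h0 | hpos
    · -- x is constant, nonzero
      have hconst : ∀ i j : V, x i = x j := by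
        intro i j
        have h2 : Matrix.toLinearMap₂' ℝ (lapm G) x x = 0 := by
          rw [Matrix.toLinearMap₂'_apply']
          exact h0.symm
        have := (SimpleGraph.lapMatrix_toLinearMap₂'_apply'_eq_zero_iff_forall_reachable
          (G := G) x).mp (by simpa [lapm] using h2)
        exact this i j (hG.preconnected i j)
      have hisum : (∑ i, x i) ≠ 0 := by
        obtain ⟨i0, hi0⟩ : ∃ i, x i ≠ 0 := by
          by_contra h
          push_neg at h
          exact hx (funext h)
        have : ∑ i, x i = (Fintype.card V : ℝ) * x i0 := by
          rw [Finset.sum_congr rfl (fun j _ => hconst j i0)]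
          simp [Finset.card_univ, mul_comm]
        rw [this]
        exact mul_ne_zero hcard.ne' hi0
      have : 0 < c * (∑ i, x i) ^ 2 :=
        mul_pos (inv_pos.mpr hcard) (by positivity)
      linarith
    · have : 0 ≤ c * (∑ i, x i) ^ 2 := by positivity
      linarith
  have hunit : IsUnit M.det := isUnit_iff_ne_zero.mpr hMpd.det_pos.ne'
  have hMM : M * M⁻¹ = 1 := Matrix.mul_nonsing_inv M hunit
  have hMM' : M⁻¹ * M = 1 := Matrix.nonsing_inv_mul M hunit
  have hMJ : M * J = J := by
    rw [hM, Matrix.add_mul, hLJ, Matrix.smul_mul, hJJ, smul_smul, hc,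
      inv_mul_cancel₀ hcard.ne']
    simp
  have hJM : J * M = J := by
    rw [hM, Matrix.mul_add, hJL, Matrix.mul_smul, hJJ, smul_smul, hc,
      inv_mul_cancel₀ hcard.ne']
    simp
  have hMiJ : M⁻¹ * J = J := by
    calc M⁻¹ * J = M⁻¹ * (M * J) := by rw [hMJ]
    _ = (M⁻¹ * M) * J := by rw [Matrix.mul_assoc]
    _ = J := by rw [hMM', Matrix.one_mul]
  have hJMi : J * M⁻¹ = J := by
    calc J * M⁻¹ = (J * M) * M⁻¹ := by rw [hJM]
    _ = J * (M * M⁻¹) := by rw [Matrix.mul_assoc]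
    _ = J := by rw [hMM, Matrix.mul_one]
  set B : Matrix V V ℝ := M⁻¹ - c • J with hB
  have hLM : L = M - c • J := by rw [hM, add_sub_cancel_right]
  have hcJJ : (c • J) * (c • J) = c • J := by
    rw [Matrix.smul_mul, Matrix.mul_smul, hJJ, smul_smul, smul_smul, hc,
      mul_comm _ ((Fintype.card V : ℝ)), ← mul_assoc,
      mul_inv_cancel₀ hcard.ne', one_mul]
  have hLB : L * B = 1 - c • J := by
    rw [hLM, hB, Matrix.sub_mul, Matrix.mul_sub, Matrix.mul_sub, hMM,
      Matrix.mul_smul, hMJ, Matrix.smul_mul, hJMi, hcJJ]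
    abel
  have hBL : B * L = 1 - c • J := by
    rw [hLM, hB, Matrix.sub_mul, Matrix.mul_sub, Matrix.mul_sub, hMM',
      Matrix.mul_smul, hMiJ, Matrix.smul_mul, hJM, hcJJ]
    abel
  have hJsymm : Jᵀ = J := by ext i j; simp [hJ]
  have hBJ : B * J = 0 := by
    rw [hB, Matrix.sub_mul, hMiJ, Matrix.smul_mul, hJJ, smul_smul, hc,
      inv_mul_cancel₀ hcard.ne', one_smul, sub_self]
  refine ⟨B, ?_, ?_, ?_, ?_⟩
  · rw [hLB, Matrix.sub_mul, Matrix.one_mul, Matrix.smul_mul, hJL, smul_zero, sub_zero]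
  · have hJB : J * B = 0 := by
      rw [hB, Matrix.mul_sub, hJMi, Matrix.mul_smul, hJJ, smul_smul, hc,
        inv_mul_cancel₀ hcard.ne', one_smul, sub_self]
    rw [hBL, Matrix.sub_mul, Matrix.one_mul, Matrix.smul_mul, hJB, smul_zero, sub_zero]
  · rw [hLB, Matrix.transpose_sub, Matrix.transpose_one, Matrix.transpose_smul, hJsymm]
  · rw [hBL, Matrix.transpose_sub, Matrix.transpose_one, Matrix.transpose_smul, hJsymm]

lemma resDist_eq_of_solution (G : SimpleGraph V) (hG : G.Connected) (u v : V)
    (x : V → ℝ) (hx : lapm G *ᵥ x = Pi.single u 1 - Pi.single v 1) :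
    resDist G u v = x u - x v := by
  classical
  set L : Matrix V V ℝ := lapm G with hL
  have hex := exists_penrose G hG
  have hCspec := hex.choose_spec
  set C := hex.choose with hC
  have hmp : L.mpinv = C := by
    rw [Matrix.mpinv, dif_pos hex]
  set b : V → ℝ := Pi.single u 1 - Pi.single v 1 with hb
  have key : b ⬝ᵥ (C *ᵥ b) = x u - x v := by
    have hbLx : b = L *ᵥ x := hx.symm
    calc b ⬝ᵥ (C *ᵥ b) = (L *ᵥ x) ⬝ᵥ (C *ᵥ (L *ᵥ x)) := by rw [← hbLx]
    _ = (x ᵥ* L) ⬝ᵥ (C *ᵥ (L *ᵥ x)) := by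
        rw [← Matrix.mulVec_transpose, (lapm_isSymm G).eq]
    _ = x ⬝ᵥ (L *ᵥ (C *ᵥ (L *ᵥ x))) := (Matrix.dotProduct_mulVec _ _ _).symm
    _ = x ⬝ᵥ ((L * C * L) *ᵥ x) := by
        rw [Matrix.mulVec_mulVec, Matrix.mulVec_mulVec, Matrix.mul_assoc]
    _ = x ⬝ᵥ (L *ᵥ x) := by rw [hCspec.1]
    _ = x ⬝ᵥ b := by rw [hbLx]
    _ = x u - x v := by
        rw [hb, dotProduct_sub]
        simp [dotProduct_single]
  rw [resDist, effRes, hmp]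
  exact key


end AuxLemmas

open Classical in

lemma lapm_mulVec_apply {V : Type*} [Fintype V] [DecidableEq V]
    (G : SimpleGraph V) (p : V) (x : V → ℝ) :
    (lapm G *ᵥ x) p = ∑ q, if G.Adj p q then (x p - x q) else 0 := by
  letI := Classical.decRel G.Adj
  have h1 : (lapm G *ᵥ x) p
      = (G.degree p : ℝ) * x p - ∑ u ∈ G.neighborFinset p, x u :=
    SimpleGraph.lapMatrix_mulVec_apply G p x
  rw [h1, SimpleGraph.degree_eq_sum_if_adj (R := ℝ) G p]
  rw [Finset.sum_mul]
  have h2 : ∑ u ∈ G.neighborFinset p, x u = ∑ q, if G.Adj p q then x q else 0 := by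
    rw [SimpleGraph.neighborFinset_eq_filter, Finset.sum_filter]
  rw [h2, ← Finset.sum_sub_distrib]
  refine Finset.sum_congr rfl fun q _ => ?_
  by_cases h : G.Adj p q <;> simp [h]

open Classical in
lemma path_sum (n : ℕ) (i : Fin n) (g : Fin n → ℝ) :
    ∑ a : Fin n, (if (SimpleGraph.pathGraph n).Adj i a then g a else 0)
      = (if h : (i : ℕ) + 1 < n then g ⟨(i : ℕ) + 1, h⟩ else 0)
        + (if h : 0 < (i : ℕ) then g ⟨(i : ℕ) - 1, by omega⟩ else 0) := by
  have hsplit : ∀ a : Fin n,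
      (if (SimpleGraph.pathGraph n).Adj i a then g a else 0)
        = (if (i : ℕ) + 1 = (a : ℕ) then g a else 0)
          + (if (a : ℕ) + 1 = (i : ℕ) then g a else 0) := by
    intro a
    rw [SimpleGraph.pathGraph_adj]
    by_cases h1 : (i : ℕ) + 1 = (a : ℕ) <;> by_cases h2 : (a : ℕ) + 1 = (i : ℕ) <;>
      simp [h1, h2] <;> omega
  rw [Finset.sum_congr rfl fun a _ => hsplit a, Finset.sum_add_distrib]
  congr 1
  · by_cases h : (i : ℕ) + 1 < n
    · rw [dif_pos h]
      have key : ∀ a : Fin n, ((i : ℕ) + 1 = (a : ℕ)) ↔ a = ⟨(i : ℕ) + 1, h⟩ := by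
        intro a; rw [Fin.ext_iff]; constructor <;> intro <;> simp_all
      simp only [key]
      rw [Finset.sum_ite_eq' Finset.univ]
      simp
    · rw [dif_neg h]
      refine Finset.sum_eq_zero fun a _ => ?_
      rw [if_neg]
      have := a.isLt
      omega
  · by_cases h : 0 < (i : ℕ)
    · rw [dif_pos h]
      have key : ∀ a : Fin n, ((a : ℕ) + 1 = (i : ℕ)) ↔ a = ⟨(i : ℕ) - 1, by omega⟩ := by
        intro a; rw [Fin.ext_iff]; constructor <;> intro <;> simp_all <;> omega
      simp only [key]
      rw [Finset.sum_ite_eq' Finset.univ]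
      simp
    · rw [dif_neg h]
      refine Finset.sum_eq_zero fun a _ => ?_
      rw [if_neg]
      omega

open Classical in
lemma ladder_lap (n : ℕ) (hn : 2 ≤ n) (v : ℕ → ℝ)
    (x : Fin n × Fin 2 → ℝ)
    (hx : ∀ p : Fin n × Fin 2, x p =
      if p.2 = 0 then (-((p.1 : ℕ) : ℝ) + v (p.1 : ℕ)) / 2
      else (-((p.1 : ℕ) : ℝ) - v (p.1 : ℕ)) / 2)
    (h0 : 3 * v 0 - v 1 = 1)
    (hlast : 3 * v (n - 1) - v (n - 2) = 1)
    (hrec : ∀ i : ℕ, 1 ≤ i → i + 1 ≤ n - 1 → 4 * v i - v (i - 1) - v (i + 1) = 0) :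
    lapm ((SimpleGraph.pathGraph n).boxProd (SimpleGraph.pathGraph 2)) *ᵥ x
      = Pi.single ((⟨0, lt_of_lt_of_le two_pos hn⟩ : Fin n), (0 : Fin 2)) 1
        - Pi.single ((⟨n - 1, Nat.sub_lt (lt_of_lt_of_le two_pos hn) one_pos⟩ : Fin n), (1 : Fin 2)) 1 := by
  have adj00 : ∀ i a : Fin n,
      ((SimpleGraph.pathGraph n).boxProd (SimpleGraph.pathGraph 2)).Adj (i, 0) (a, 0)
        ↔ (SimpleGraph.pathGraph n).Adj i a := fun i a =>
    SimpleGraph.boxProd_adj_left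
  have adj11 : ∀ i a : Fin n,
      ((SimpleGraph.pathGraph n).boxProd (SimpleGraph.pathGraph 2)).Adj (i, 1) (a, 1)
        ↔ (SimpleGraph.pathGraph n).Adj i a := fun i a =>
    SimpleGraph.boxProd_adj_left
  have hpg2 : (SimpleGraph.pathGraph 2).Adj 0 1 := by
    rw [SimpleGraph.pathGraph_adj]; left; rfl
  have adj01 : ∀ i a : Fin n,
      ((SimpleGraph.pathGraph n).boxProd (SimpleGraph.pathGraph 2)).Adj (i, 0) (a, 1)
        ↔ i = a := by
    intro i a
    rw [SimpleGraph.boxProd_adj]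
    constructor
    · rintro (⟨-, h⟩ | ⟨-, h⟩)
      · have h' : (0 : Fin 2) = 1 := h
        exact absurd h' (by decide)
      · exact h
    · intro h; exact Or.inr ⟨hpg2, h⟩
  have adj10 : ∀ i a : Fin n,
      ((SimpleGraph.pathGraph n).boxProd (SimpleGraph.pathGraph 2)).Adj (i, 1) (a, 0)
        ↔ i = a := by
    intro i a
    rw [SimpleGraph.boxProd_adj]
    constructor
    · rintro (⟨-, h⟩ | ⟨-, h⟩)
      · have h' : (1 : Fin 2) = 0 := h
        exact absurd h' (by decide)
      · exact h
    · intro h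
      exact Or.inr ⟨hpg2.symm, h⟩
  funext p
  obtain ⟨i, j⟩ := p
  rw [lapm_mulVec_apply, Fintype.sum_prod_type]
  simp only [Fin.sum_univ_two]
  rw [Finset.sum_add_distrib]
  have hxval0 : ∀ a : Fin n, x (a, 0) = (-((a : ℕ) : ℝ) + v (a : ℕ)) / 2 := by
    intro a; rw [hx]; simp
  have hxval1 : ∀ a : Fin n, x (a, 1) = (-((a : ℕ) : ℝ) - v (a : ℕ)) / 2 := by
    intro a; rw [hx]; norm_num
  have hrhs : ∀ i' : Fin n, ∀ j' : Fin 2,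
      ((Pi.single ((⟨0, lt_of_lt_of_le two_pos hn⟩ : Fin n), (0 : Fin 2)) (1:ℝ)
        - Pi.single ((⟨n - 1, Nat.sub_lt (lt_of_lt_of_le two_pos hn) one_pos⟩ : Fin n), (1 : Fin 2)) 1 :
          Fin n × Fin 2 → ℝ)) (i', j')
      = (if (i' : ℕ) = 0 ∧ j' = 0 then 1 else 0)
        - (if (i' : ℕ) = n - 1 ∧ j' = 1 then 1 else 0) := by
    intro i' j'
    rw [Pi.sub_apply, Pi.single_apply, Pi.single_apply]
    congr 1
    · congr 1
      simp only [Prod.ext_iff, Fin.ext_iff]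
    · congr 1
      simp only [Prod.ext_iff, Fin.ext_iff]
  fin_cases j
  · -- j = 0
    simp only [Fin.zero_eta]
    simp only [hrhs]
    have e1 : ∑ a : Fin n,
        (if ((SimpleGraph.pathGraph n).boxProd (SimpleGraph.pathGraph 2)).Adj (i, 0) (a, 0)
          then x (i, 0) - x (a, 0) else 0)
        = (if h : (i : ℕ) + 1 < n then x (i, 0) - x (⟨(i : ℕ) + 1, h⟩, 0) else 0)
          + (if h : 0 < (i : ℕ) then x (i, 0) - x (⟨(i : ℕ) - 1, by omega⟩, 0) else 0) := by
      rw [Finset.sum_congr rfl fun a _ => by rw [if_congr (adj00 i a) rfl rfl]]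
      exact path_sum n i _
    have e2 : ∑ a : Fin n,
        (if ((SimpleGraph.pathGraph n).boxProd (SimpleGraph.pathGraph 2)).Adj (i, 0) (a, 1)
          then x (i, 0) - x (a, 1) else 0)
        = x (i, 0) - x (i, 1) := by
      rw [Finset.sum_congr rfl fun a _ => by rw [if_congr (adj01 i a) rfl rfl]]
      rw [Finset.sum_ite_eq Finset.univ]
      simp
    rw [e1, e2]
    rcases Nat.lt_trichotomy (i : ℕ) (n - 1) with hi | hi | hi
    · rcases Nat.eq_zero_or_pos (i : ℕ) with hi0 | hi0
      · -- i = 0 : corner, value 1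
        rw [dif_pos (by omega), dif_neg (by omega), if_pos ⟨hi0, by trivial⟩, if_neg (by omega)]
        rw [hxval0, hxval0, hxval1]
        simp only [hi0]
        push_cast
        linarith [h0]
      · -- interior
        rw [dif_pos (by omega), dif_pos hi0, if_neg (by omega), if_neg (by simp)]
        rw [hxval0, hxval0, hxval0, hxval1]
        simp only
        have hrec' := hrec (i : ℕ) hi0 (by omega)
        have hc : (((i : ℕ) - 1 : ℕ) : ℝ) = ((i : ℕ) : ℝ) - 1 := by
          push_cast [hi0]; ring
        rw [hc]
        push_cast
        linarith [hrec']
    · -- i = n - 1 : value 0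
      rw [dif_neg (by omega), dif_pos (by omega), if_neg (by omega), if_neg (by simp)]
      rw [hxval0, hxval0, hxval1]
      have h1 : 3 * v (i : ℕ) - v ((i : ℕ) - 1) = 1 := by
        rw [hi, show (n - 1 - 1) = n - 2 by omega] at *
        exact hlast
      have hc : (((i : ℕ) - 1 : ℕ) : ℝ) = ((i : ℕ) : ℝ) - 1 := by
        have : 0 < (i : ℕ) := by omega
        push_cast [this]; ring
      rw [hc]
      linarith [h1]
    · exact absurd i.isLt (by omega)
  · -- j = 1
    simp only [Fin.mk_one]
    simp only [hrhs]
    have e1 : ∑ a : Fin n,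
        (if ((SimpleGraph.pathGraph n).boxProd (SimpleGraph.pathGraph 2)).Adj (i, 1) (a, 1)
          then x (i, 1) - x (a, 1) else 0)
        = (if h : (i : ℕ) + 1 < n then x (i, 1) - x (⟨(i : ℕ) + 1, h⟩, 1) else 0)
          + (if h : 0 < (i : ℕ) then x (i, 1) - x (⟨(i : ℕ) - 1, by omega⟩, 1) else 0) := by
      rw [Finset.sum_congr rfl fun a _ => by rw [if_congr (adj11 i a) rfl rfl]]
      exact path_sum n i _
    have e2 : ∑ a : Fin n,
        (if ((SimpleGraph.pathGraph n).boxProd (SimpleGraph.pathGraph 2)).Adj (i, 1) (a, 0)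
          then x (i, 1) - x (a, 0) else 0)
        = x (i, 1) - x (i, 0) := by
      rw [Finset.sum_congr rfl fun a _ => by rw [if_congr (adj10 i a) rfl rfl]]
      rw [Finset.sum_ite_eq Finset.univ]
      simp
    rw [e2, e1]
    rcases Nat.lt_trichotomy (i : ℕ) (n - 1) with hi | hi | hi
    · rcases Nat.eq_zero_or_pos (i : ℕ) with hi0 | hi0
      · -- i = 0, j = 1 : value 0
        rw [dif_pos (by omega), dif_neg (by omega), if_neg (by simp), if_neg (by omega)]
        rw [hxval1, hxval1, hxval0]
        simp only [hi0]
        push_cast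
        linarith [h0]
      · -- interior
        rw [dif_pos (by omega), dif_pos hi0, if_neg (by simp), if_neg (by omega)]
        rw [hxval1, hxval1, hxval1, hxval0]
        have hrec' := hrec (i : ℕ) hi0 (by omega)
        have hc : (((i : ℕ) - 1 : ℕ) : ℝ) = ((i : ℕ) : ℝ) - 1 := by
          push_cast [hi0]; ring
        rw [hc]
        push_cast
        linarith [hrec']
    · -- i = n-1, j = 1 : value -1
      rw [dif_neg (by omega), dif_pos (by omega), if_neg (by simp), if_pos ⟨hi, by trivial⟩]
      rw [hxval1, hxval1, hxval0]
      have h1 : 3 * v (i : ℕ) - v ((i : ℕ) - 1) = 1 := by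
        rw [hi, show (n - 1 - 1) = n - 2 by omega] at *
        exact hlast
      have hc : (((i : ℕ) - 1 : ℕ) : ℝ) = ((i : ℕ) : ℝ) - 1 := by
        have : 0 < (i : ℕ) := by omega
        push_cast [this]; ring
      rw [hc]
      linarith [h1]
    · exact absurd i.isLt (by omega)

/-- Closed formula for the diagonal corner-to-corner resistance distance in the
ladder graph `L_n = P_n □ K_2`. -/
theorem resDist_ladder_formula (n : ℕ) (hn : 2 ≤ n) (alpha : ℝ)
    (halpha : alpha = 2 - Real.sqrt 3) :
    resDist ((SimpleGraph.pathGraph n).boxProd (SimpleGraph.pathGraph 2))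
        (⟨0, by omega⟩, 0) (⟨n - 1, by omega⟩, 1)
      = ((n : ℝ) - 1) / 2
        + (1 + alpha ^ (n - 1)) * (2 + 2 * alpha ^ (n + 1) + 2 * alpha ^ n + 2 * alpha)
            / (4 * Real.sqrt 3 * (1 - alpha ^ (2 * n))) := by
  obtain rfl := halpha
  obtain ⟨m, rfl⟩ : ∃ m, n = m + 2 := ⟨n - 2, by omega⟩
  set s : ℝ := Real.sqrt 3 with hsdef
  have hs2 : s ^ 2 = 3 := Real.sq_sqrt (by norm_num)
  have hs_pos : 0 < s := Real.sqrt_pos.mpr (by norm_num)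
  have hs1 : 1 < s := by nlinarith
  have hs_lt2 : s < 2 := by nlinarith
  set a : ℝ := 2 - s with ha
  have ha0 : 0 < a := by rw [ha]; linarith
  have ha1 : a < 1 := by rw [ha]; linarith
  have hpow1 : ∀ k : ℕ, 0 < k → a ^ k < 1 := fun k hk =>
    pow_lt_one₀ ha0.le ha1 hk.ne'
  have hden : (0:ℝ) < 1 - a ^ (m + 2) := by
    have := hpow1 (m + 2) (by omega)
    linarith
  set A : ℝ := (1 + a) / (2 * s * (1 - a ^ (m + 2))) with hA
  set v : ℕ → ℝ := fun i => A * (a ^ i + a ^ (m + 2 - 1 - i)) with hv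
  set x : Fin (m + 2) × Fin 2 → ℝ := fun p =>
    if p.2 = 0 then (-((p.1 : ℕ) : ℝ) + v (p.1 : ℕ)) / 2
    else (-((p.1 : ℕ) : ℝ) - v (p.1 : ℕ)) / 2 with hxdef
  have hconn : ((SimpleGraph.pathGraph (m + 2)).boxProd
      (SimpleGraph.pathGraph 2)).Connected := by
    rw [SimpleGraph.connected_boxProd]
    exact ⟨SimpleGraph.pathGraph_connected (m + 1), SimpleGraph.pathGraph_connected 1⟩
  have hne2s : 2 * s * (1 - a ^ (m + 2)) ≠ 0 :=
    mul_ne_zero (mul_ne_zero two_ne_zero hs_pos.ne') hden.ne'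
  have h0 : 3 * v 0 - v 1 = 1 := by
    have e0 : v 0 = A * (1 + a ^ (m + 1)) := by
      simp only [hv]; norm_num
    have e1 : v 1 = A * (a + a ^ m) := by
      simp only [hv]
      rw [show m + 2 - 1 - 1 = m from by omega, pow_one]
    rw [e0, e1, hA, div_mul_eq_mul_div, div_mul_eq_mul_div, ← mul_div_assoc,
      ← sub_div, div_eq_one_iff_eq hne2s]
    rw [show a ^ (m + 1) = a ^ m * a from by rw [pow_succ],
      show a ^ (m + 2) = a ^ m * a ^ 2 from by rw [pow_add]]
    rw [ha]
    linear_combination ((2 * s - 5) * (2 - s) ^ m - 1) * hs2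
  have hsym1 : v (m + 2 - 1) = v 0 := by
    simp only [hv]
    rw [show m + 2 - 1 - (m + 2 - 1) = 0 from by omega,
      show m + 2 - 1 - 0 = m + 1 from by omega,
      show m + 2 - 1 = m + 1 from by omega]
    ring
  have hsym2 : v (m + 2 - 2) = v 1 := by
    simp only [hv]
    rw [show m + 2 - 2 = m from by omega, show m + 2 - 1 - m = 1 from by omega,
      show m + 2 - 1 - 1 = m from by omega]
    ring
  have hlast : 3 * v (m + 2 - 1) - v (m + 2 - 2) = 1 := by
    rw [hsym1, hsym2]; exact h0
  have hrec : ∀ i : ℕ, 1 ≤ i → i + 1 ≤ m + 2 - 1 →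
      4 * v i - v (i - 1) - v (i + 1) = 0 := by
    intro i h1 h2
    obtain ⟨k, rfl⟩ : ∃ k, i = k + 1 := ⟨i - 1, by omega⟩
    obtain ⟨l, hl⟩ : ∃ l, m + 2 - 1 - (k + 1) = l + 1 := ⟨m + 2 - 1 - (k + 1) - 1, by omega⟩
    have e1 : v (k + 1) = A * (a ^ (k + 1) + a ^ (l + 1)) := by simp only [hv]; rw [hl]
    have e2 : v (k + 1 - 1) = A * (a ^ k + a ^ (l + 2)) := by
      simp only [hv]; rw [show k + 1 - 1 = k from by omega, show m + 2 - 1 - k = l + 2 from by omega]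
    have e3 : v (k + 1 + 1) = A * (a ^ (k + 2) + a ^ l) := by
      simp only [hv]; rw [show k + 1 + 1 = k + 2 from by omega,
        show m + 2 - 1 - (k + 2) = l from by omega]
    rw [e1, e2, e3, ha]
    linear_combination (-(A * ((2 - s) ^ k + (2 - s) ^ l))) * hs2
  have hxsol := ladder_lap (m + 2) (by omega) v x (fun p => rfl) h0 hlast hrec
  have hres := resDist_eq_of_solution
    ((SimpleGraph.pathGraph (m + 2)).boxProd (SimpleGraph.pathGraph 2)) hconn
    ((⟨0, by omega⟩ : Fin (m + 2)), (0 : Fin 2))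
    ((⟨m + 2 - 1, by omega⟩ : Fin (m + 2)), (1 : Fin 2)) x hxsol
  rw [hres]
  have hx1 : x ((⟨0, by omega⟩ : Fin (m + 2)), (0 : Fin 2)) = v 0 / 2 := by
    simp only [hxdef]
    norm_num
  have hx2 : x ((⟨m + 2 - 1, by omega⟩ : Fin (m + 2)), (1 : Fin 2))
      = (-(((m + 2 - 1 : ℕ)) : ℝ) - v (m + 2 - 1)) / 2 := by
    simp only [hxdef]
    norm_num
  rw [hx1, hx2, hsym1]
  have hcast : (((m + 2 - 1 : ℕ)) : ℝ) = ((m + 2 : ℕ) : ℝ) - 1 := by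
    push_cast [show (1:ℕ) ≤ m + 2 from by omega]
    ring
  rw [hcast]
  have hv0 : v 0 = A * (1 + a ^ (m + 1)) := by simp only [hv]; norm_num
  have key : v 0 = (1 + a ^ (m + 2 - 1)) *
      (2 + 2 * a ^ (m + 2 + 1) + 2 * a ^ (m + 2) + 2 * a)
      / (4 * s * (1 - a ^ (2 * (m + 2)))) := by
    rw [hv0, hA]
    rw [show m + 2 - 1 = m + 1 from by omega, show m + 2 + 1 = m + 3 from by omega]
    have hfac : 1 - a ^ (2 * (m + 2)) = (1 - a ^ (m + 2)) * (1 + a ^ (m + 2)) := by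
      rw [two_mul, pow_add]; ring
    have hne3 : (1:ℝ) + a ^ (m + 2) ≠ 0 := by positivity
    rw [hfac]
    field_simp
    ring
  rw [key]
  push_cast
  ring
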